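/- Let s be a network state and T ⊆ F a set of fix-actions satisfying the following enabling-closure condition: for every f ∈ T that is not applicable to s, there exists a literal ℓ ∈ pre(f) not satisfied by s such that every f' ∈ F with ℓ ∈ post(f') belongs to T. Let σ = f₁, …, f_n be a sequence over F applicable to s, and let k be an index such that f_k ∈ T and f_j ∉ T for all j < k. Then f_k is applicable to s. -/

import Mathlib

/-- A fix-action over network propositions `P`: precondition and postcondition
are finite sets of literals (a literal is a pair of a proposition and a
polarity, `true` for a positive and `false` for a negative occurrence),
containing at most one literal per proposition, together with a strictly
positive real cost. -/
structure FixAction (P : Type*) where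
  pre : Finset (P × Bool)
  post : Finset (P × Bool)
  cost : ℝ
  cost_pos : 0 < cost
  pre_unique : ∀ (p : P) (b b' : Bool), (p, b) ∈ pre → (p, b') ∈ pre → b = b'
  post_unique : ∀ (p : P) (b b' : Bool), (p, b) ∈ post → (p, b') ∈ post → b = b'

variable {P : Type*} [DecidableEq P]

/-- A network state `s` satisfies a literal `(p, true)` iff `p ∈ s`,
and satisfies `(p, false)` iff `p ∉ s`. -/
def satLit (s : Finset P) (l : P × Bool) : Prop :=
  (l.1 ∈ s) ↔ l.2 = true

/-- A fix-action is applicable to a state if the state satisfies every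
literal of its precondition. -/
def FixAction.applicable (f : FixAction P) (s : Finset P) : Prop :=
  ∀ l ∈ f.pre, satLit s l

/-- The result `s[f]` of applying a fix-action: every proposition occurring
positively in `post f`, together with every proposition of `s` whose
negation does not occur in `post f`. -/
def FixAction.applyTo (f : FixAction P) (s : Finset P) : Finset P :=
  (f.post.filter (fun l => l.2 = true)).image Prod.fst ∪
    s.filter (fun p => (p, false) ∉ f.post)

/-- Applicability of a finite sequence of fix-actions to a state. -/
def seqApplicable (s : Finset P) : List (FixAction P) → Prop
  | [] => True
  | f :: σ => f.applicable s ∧ seqApplicable (f.applyTo s) σ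

/-- The result `s[σ]` of applying a sequence of fix-actions. -/
def seqApply (s : Finset P) : List (FixAction P) → Finset P
  | [] => s
  | f :: σ => seqApply (f.applyTo s) σ

/-- The cost of a sequence of fix-actions: the sum of the costs of its
elements. -/
noncomputable def seqCost (σ : List (FixAction P)) : ℝ :=
  (σ.map FixAction.cost).sum

lemma mem_applyTo (f : FixAction P) (s : Finset P) (p : P) :
    p ∈ f.applyTo s ↔ (p, true) ∈ f.post ∨ (p ∈ s ∧ (p, false) ∉ f.post) := by
  simp only [FixAction.applyTo, Finset.mem_union, Finset.mem_image,
    Finset.mem_filter, Prod.exists]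
  constructor
  · rintro (⟨a, b, ⟨hm, hb⟩, heq⟩ | ⟨hs, hn⟩)
    · subst hb heq; exact Or.inl hm
    · exact Or.inr ⟨hs, hn⟩
  · rintro (hm | ⟨hs, hn⟩)
    · exact Or.inl ⟨p, true, ⟨hm, rfl⟩, rfl⟩
    · exact Or.inr ⟨hs, hn⟩

lemma satLit_preserve (f : FixAction P) (s : Finset P) (l : P × Bool)
    (hl : ¬ satLit s l) (hpost : l ∉ f.post) : ¬ satLit (f.applyTo s) l := by
  obtain ⟨p, b⟩ := l
  unfold satLit at *
  simp only at *
  cases b with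
  | true =>
    intro h
    have hp : p ∈ f.applyTo s := h.mpr rfl
    rcases (mem_applyTo f s p).mp hp with hm | ⟨hs, _⟩
    · exact hpost hm
    · exact hl ⟨fun _ => rfl, fun _ => hs⟩
  | false =>
    intro h
    simp only [Bool.false_eq_true, iff_false] at hl h
    push_neg at hl
    exact h ((mem_applyTo f s p).mpr (Or.inr ⟨hl, hpost⟩))

lemma key_lemma : ∀ (σ : List (FixAction P)) (s : Finset P),
    seqApplicable s σ → ∀ (k : Fin σ.length) (l : P × Bool),
    l ∈ (σ.get k).pre → ¬ satLit s l →
    (∀ j : Fin σ.length, j < k → l ∉ (σ.get j).post) → False := by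
  intro σ
  induction σ with
  | nil => intro s _ k; exact absurd k.2 (by simp)
  | cons f rest ih =>
    intro s happ k l hlpre hls hpost
    match k with
    | ⟨0, _⟩ =>
      exact hls (happ.1 l hlpre)
    | ⟨j + 1, hj⟩ =>
      have hf : l ∉ f.post := hpost ⟨0, Nat.succ_pos _⟩ (by simp [Fin.lt_def])
      exact ih (f.applyTo s) happ.2 ⟨j, Nat.lt_of_succ_lt_succ hj⟩ l hlpre
        (satLit_preserve f s l hls hf)
        (fun j' hj' => hpost ⟨j'.1 + 1, Nat.succ_lt_succ j'.2⟩
          (by simpa [Fin.lt_def] using Nat.succ_lt_succ hj'))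

/-- Enabling-closure: if `T ⊆ F` is such that every `f ∈ T` not applicable to
`s` has some unsatisfied precondition literal all of whose achievers in `F`
belong to `T`, then in any sequence over `F` applicable to `s`, the first
action belonging to `T` is applicable to `s`. -/
theorem first_stubborn_action_applicable
    {P : Type*} [DecidableEq P]
    (F : Finset (FixAction P)) (s : Finset P) (T : Set (FixAction P))
    (hTF : ∀ f ∈ T, f ∈ F)
    (hT : ∀ f ∈ T, ¬ f.applicable s →
      ∃ l ∈ f.pre, ¬ satLit s l ∧ ∀ f' ∈ F, l ∈ f'.post → f' ∈ T)
    (σ : List (FixAction P)) (hσF : ∀ f ∈ σ, f ∈ F)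
    (happ : seqApplicable s σ)
    (k : Fin σ.length) (hk : σ.get k ∈ T)
    (hkmin : ∀ j : Fin σ.length, j < k → σ.get j ∉ T) :
    (σ.get k).applicable s := by
  by_contra hna
  obtain ⟨l, hlpre, hls, hach⟩ := hT _ hk hna
  exact key_lemma σ s happ k l hlpre hls
    (fun j hj hlj => hkmin j hj (hach _ (hσF _ (by exact List.get_mem σ j)) hlj))
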